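/- For n even, two arithmetic frieze patterns of width n with the same second row are equal; i.e., the map sending a frieze pattern to its second row is injective on arithmetic frieze patterns of even width. -/

import Mathlib

/-- A closed Y-frieze pattern of width `n`: a staggered array `b i j` (row `k`
consists of entries `b i (i+k+2)`) satisfying the Y-diamond rule, with zeroth
row and `(n+1)`-th row of `0`s, a row of `-1`s below, nonzero intermediate
rows, and normalized to `0` outside the pattern. -/
structure ClosedYFrieze (n : ℕ) where
  b : ℤ → ℤ → ℚ
  diamond : ∀ i j : ℤ, 3 ≤ j - i → j - i ≤ (n : ℤ) + 3 →
    b i j * b (i + 1) (j + 1) = (1 + b (i + 1) j) * (1 + b i (j + 1))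
  topZero : ∀ i : ℤ, b i (i + 2) = 0
  botZero : ∀ i : ℤ, b i (i + (n : ℤ) + 3) = 0
  negRow : ∀ i : ℤ, b i (i + (n : ℤ) + 4) = -1
  rowsNonzero : ∀ k : ℕ, 1 ≤ k → k ≤ n → ∃ i : ℤ, b i (i + (k : ℤ) + 2) ≠ 0
  outside : ∀ i j : ℤ, j - i ≤ 1 ∨ (n : ℤ) + 5 ≤ j - i → b i j = 0

/-- All entries of the nonzero rows are positive rationals. -/
def ClosedYFrieze.Positive {n : ℕ} (P : ClosedYFrieze n) : Prop :=
  ∀ (i : ℤ) (k : ℕ), 1 ≤ k → k ≤ n → 0 < P.b i (i + (k : ℤ) + 2)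

/-- All entries of the nonzero rows are positive integers. -/
def ClosedYFrieze.Arithmetic {n : ℕ} (P : ClosedYFrieze n) : Prop :=
  ∀ (i : ℤ) (k : ℕ), 1 ≤ k → k ≤ n → ∃ m : ℕ, 0 < m ∧ P.b i (i + (k : ℤ) + 2) = (m : ℚ)

/-- A closed (Coxeter) frieze pattern of width `n`: a staggered array `a i j`
(row `k` consists of entries `a i (i+k+1)`) satisfying the diamond rule
`a_{i,j} a_{i+1,j+1} = 1 + a_{i,j+1} a_{i+1,j}`, bounded above and below by
rows of `1`s, and normalized to `0` outside. -/
structure ClosedFrieze (n : ℕ) where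
  a : ℤ → ℤ → ℚ
  diamond : ∀ i j : ℤ, 2 ≤ j - i → j - i ≤ (n : ℤ) + 1 →
    a i j * a (i + 1) (j + 1) = 1 + a i (j + 1) * a (i + 1) j
  topOne : ∀ i : ℤ, a i (i + 1) = 1
  botOne : ∀ i : ℤ, a i (i + (n : ℤ) + 2) = 1
  outside : ∀ i j : ℤ, j - i ≤ 0 ∨ (n : ℤ) + 3 ≤ j - i → a i j = 0

/-- All entries of the interior rows are positive integers. -/
def ClosedFrieze.Arithmetic {n : ℕ} (A : ClosedFrieze n) : Prop :=
  ∀ (i : ℤ) (k : ℕ), 1 ≤ k → k ≤ n → ∃ m : ℕ, 0 < m ∧ A.a i (i + (k : ℤ) + 1) = (m : ℚ)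

namespace ClosedFrieze
variable {n : ℕ} (A : ClosedFrieze n)

lemma pos_entry (hA : A.Arithmetic) (i j : ℤ) (h1 : 1 ≤ j - i) (h2 : j - i ≤ (n:ℤ) + 2) :
    0 < A.a i j := by
  rcases eq_or_lt_of_le h1 with h | h
  · have hj : j = i + 1 := by omega
    rw [hj, A.topOne]; norm_num
  rcases eq_or_lt_of_le h2 with h' | h'
  · have hj : j = i + (n:ℤ) + 2 := by omega
    rw [hj, A.botOne]; norm_num
  · set k : ℕ := (j - i - 1).toNat with hk
    have hk1 : 1 ≤ k := by omega
    have hk2 : k ≤ n := by omega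
    have hj : j = i + (k:ℤ) + 1 := by omega
    obtain ⟨m, hm, he⟩ := hA i k hk1 hk2
    rw [hj, he]
    exact_mod_cast hm

lemma rec_entry (hn : 1 ≤ n) (hA : A.Arithmetic) :
    ∀ d : ℕ, d ≤ n → ∀ i : ℤ,
      A.a i (i + d + 2) = A.a (i + d) (i + d + 2) * A.a i (i + d + 1) - A.a i (i + d) := by
  intro d
  induction d using Nat.strong_induction_on with
  | _ d ih =>
    intro hd i
    match d with
    | 0 =>
      have h0 : A.a i i = 0 := A.outside i i (by omega)
      have h1 : A.a i (i + 1) = 1 := A.topOne i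
      push_cast
      ring_nf
      ring_nf at h0 h1
      rw [h1, h0]
      ring
    | 1 =>
      have hD := A.diamond i (i + 2) (by omega) (by push_cast; omega)
      have h1 : A.a (i + 1) (i + 1 + 1) = 1 := A.topOne (i + 1)
      have h2 : A.a i (i + 1) = 1 := A.topOne i
      push_cast
      ring_nf at hD h1 h2 ⊢
      rw [h1] at hD
      rw [h2]
      linarith [hD]
    | (e + 2) =>
      have ihe := ih (e + 1) (by omega) (by omega) (i + 1)
      have hD1 := A.diamond i (i + e + 2) (by omega) (by push_cast; omega)
      have hD2 := A.diamond i (i + e + 3) (by omega) (by push_cast; omega)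
      have hw : 0 < A.a (i + 1) (i + e + 3) := by
        apply pos_entry A hA
        · omega
        · push_cast; omega
      have hw' : A.a (i + 1) (i + e + 3) ≠ 0 := ne_of_gt hw
      apply mul_right_cancel₀ hw'
      push_cast at ihe ⊢
      ring_nf at ihe hD1 hD2 ⊢
      linear_combination hD1 - hD2 + A.a i (3 + i + (e:ℤ)) * ihe


lemma rowN (hn : 1 ≤ n) (hA : A.Arithmetic) (i : ℤ) :
    A.a i (i + n + 1) = A.a (i + n + 1) (i + n + 3) := by
  have hrec := A.rec_entry hn hA n le_rfl (i + 1)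
  have hb1 := A.botOne (i + 1)
  have hb2 := A.botOne i
  have hD := A.diamond i (i + n + 1) (by push_cast; omega) (by push_cast; omega)
  have hpos : 0 < A.a (i + 1) (i + 1 + n + 1) := by
    apply A.pos_entry hA
    · omega
    · push_cast; omega
  have key : (A.a (i + n + 1) (i + n + 3) - A.a i (i + n + 1)) * A.a (i + 1) (i + 1 + n + 1) = 0 := by
    ring_nf at hrec hb1 hb2 hD ⊢
    linear_combination -hrec - hD + hb1 - A.a (1 + i) (1 + i + (n:ℤ)) * hb2
  rcases mul_eq_zero.mp key with h | h
  · linarith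
  · exact absurd h (ne_of_gt hpos)

def flip : ClosedFrieze n where
  a := fun i j => A.a (-j) (-i)
  diamond := by
    intro i j h1 h2
    have hD := A.diamond (-(j+1)) (-(i+1)) (by omega) (by omega)
    have e1 : -(j+1) + 1 = -j := by ring
    have e2 : -(i+1) + 1 = -i := by ring
    rw [e1, e2] at hD
    linear_combination hD
  topOne := by
    intro i
    have h := A.topOne (-(i+1))
    rw [show -(i+1) + 1 = -i from by ring] at h
    exact h
  botOne := by
    intro i
    have h := A.botOne (-(i + (n:ℤ) + 2))
    rw [show -(i + (n:ℤ) + 2) + (n:ℤ) + 2 = -i from by ring] at h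
    exact h
  outside := by
    intro i j h
    exact A.outside (-j) (-i) (by omega)

lemma flip_arith (hA : A.Arithmetic) : A.flip.Arithmetic := by
  intro i k h1 h2
  obtain ⟨m, hm, he⟩ := hA (-(i + (k:ℤ) + 1)) k h1 h2
  refine ⟨m, hm, ?_⟩
  rw [show -(i + (k:ℤ) + 1) + (k:ℤ) + 1 = -i from by ring] at he
  exact he

lemma periodic (hn : 1 ≤ n) (hA : A.Arithmetic) (i : ℤ) :
    A.a (i + n + 3) (i + n + 5) = A.a i (i + 2) := by
  have h1 := A.rowN hn hA (i + 2)
  have h2 := A.flip.rowN hn (A.flip_arith hA) (-(i + (n:ℤ) + 3))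
  dsimp only [flip] at h2
  ring_nf at h1 h2 ⊢
  linarith

end ClosedFrieze



/-- For `n` even, two arithmetic frieze patterns of width `n` with the same second
row `(a i (i+3))` are equal. -/
theorem stmt13 (n : ℕ) (hn : 1 ≤ n) (hev : Even n) (A A' : ClosedFrieze n)
    (hA : A.Arithmetic) (hA' : A'.Arithmetic)
    (h2 : ∀ i : ℤ, A.a i (i + 3) = A'.a i (i + 3)) : A = A' := by
  -- positivity of row 1
  have px : ∀ i : ℤ, 0 < A.a i (i + 2) := fun i => A.pos_entry hA i (i+2) (by omega) (by omega)
  have px' : ∀ i : ℤ, 0 < A'.a i (i + 2) := fun i => A'.pos_entry hA' i (i+2) (by omega) (by omega)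
  -- products of consecutive row-1 entries agree
  have pe : ∀ i : ℤ, A.a i (i+2) * A.a (i+1) (i+3) = A'.a i (i+2) * A'.a (i+1) (i+3) := by
    intro i
    have d1 := A.diamond i (i+2) (by omega) (by omega)
    have d2 := A'.diamond i (i+2) (by omega) (by omega)
    have t1 := A.topOne (i+1)
    have t2 := A'.topOne (i+1)
    have hy := h2 i
    ring_nf at d1 d2 t1 t2 hy ⊢
    rw [t1] at d1
    rw [t2] at d2
    linear_combination d1 - d2 + hy
  -- "two-step" relation
  have step : ∀ i : ℤ, A.a i (i+2) * A'.a (i+2) (i+4) = A'.a i (i+2) * A.a (i+2) (i+4) := by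
    intro i
    have hc : A.a (i+1) (i+3) * A'.a (i+1) (i+3) ≠ 0 :=
      ne_of_gt (mul_pos (by have := px (i+1); ring_nf at this ⊢; exact this)
        (by have := px' (i+1); ring_nf at this ⊢; exact this))
    apply mul_left_cancel₀ hc
    have p1 := pe i
    have p2 := pe (i+1)
    ring_nf at p1 p2 ⊢
    linear_combination (A'.a (1+i) (3+i) * A'.a (2+i) (4+i)) * p1 - (A'.a i (2+i) * A'.a (1+i) (3+i)) * p2
  -- iterate the two-step relation
  have iter : ∀ k : ℕ, ∀ i : ℤ,
      A.a i (i+2) * A'.a (i+2*k) (i+2*k+2) = A'.a i (i+2) * A.a (i+2*k) (i+2*k+2) := by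
    intro k
    induction k with
    | zero => intro i; push_cast; ring_nf
    | succ k ihk =>
      intro i
      have hc : A.a (i+2*k) (i+2*k+2) * A'.a (i+2*k) (i+2*k+2) ≠ 0 :=
        ne_of_gt (mul_pos (px (i+2*k)) (px' (i+2*k)))
      apply mul_left_cancel₀ hc
      have hs := step (i+2*(k:ℤ))
      have hi := ihk i
      push_cast at hs hi ⊢
      ring_nf at hs hi ⊢
      linear_combination (A.a i (2+i) * A'.a (i+(k:ℤ)*2) (2+i+(k:ℤ)*2)) * hs +
        (A.a (2+i+(k:ℤ)*2) (4+i+(k:ℤ)*2) * A'.a (i+(k:ℤ)*2) (2+i+(k:ℤ)*2)) * hi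
  -- row 1 agrees
  have hx : ∀ i : ℤ, A.a i (i+2) = A'.a i (i+2) := by
    intro i
    obtain ⟨m, hm⟩ := hev
    have hmz : (n:ℤ) = (m:ℤ) + (m:ℤ) := by exact_mod_cast hm
    have hit := iter (m+1) i
    have e1 : i + 2*((m+1:ℕ):ℤ) = (i-1) + (n:ℤ) + 3 := by push_cast; omega
    rw [e1] at hit
    rw [show (i-1) + (n:ℤ) + 3 + 2 = (i-1) + (n:ℤ) + 5 by ring] at hit
    rw [A.periodic hn hA (i-1), A'.periodic hn hA' (i-1)] at hit
    have hp1 := pe (i-1)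
    have h1 := px (i-1)
    have h1' := px' (i-1)
    have h3 := px i
    have h3' := px' i
    ring_nf at hit hp1 h1 h1' h3 h3' ⊢
    have key : (A.a i (2+i) - A'.a i (2+i)) *
        ((A.a i (2+i) + A'.a i (2+i)) * (A.a (-1+i) (1+i) * A'.a (-1+i) (1+i))) = 0 := by
      linear_combination (A.a i (2+i) * A'.a (-1+i) (1+i)) * hp1 +
        (A'.a i (2+i) * A'.a (-1+i) (1+i)) * hit
    rcases mul_eq_zero.mp key with h | h
    · linarith
    · have : 0 < (A.a i (2+i) + A'.a i (2+i)) * (A.a (-1+i) (1+i) * A'.a (-1+i) (1+i)) := by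
        apply mul_pos (by linarith) (mul_pos h1 h1')
      linarith
  -- all rows agree
  have hrow : ∀ d : ℕ, d ≤ n → ∀ i : ℤ, A.a i (i + d + 1) = A'.a i (i + d + 1) := by
    intro d
    induction d using Nat.strong_induction_on with
    | _ d ih =>
      intro hd i
      match d with
      | 0 =>
        push_cast
        rw [show i + (0:ℤ) + 1 = i + 1 by ring, A.topOne, A'.topOne]
      | 1 =>
        have := hx i
        push_cast
        ring_nf at this ⊢
        exact this
      | (e + 2) =>
        have r1 := A.rec_entry hn hA (e+1) (by omega) i
        have r2 := A'.rec_entry hn hA' (e+1) (by omega) i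
        have i1 := ih (e+1) (by omega) (by omega) i
        have i2 := ih e (by omega) (by omega) i
        have i3 := hx (i + (e:ℤ) + 1)
        push_cast at r1 r2 i1 i2 i3 ⊢
        ring_nf at r1 r2 i1 i2 i3 ⊢
        rw [i1, i2, i3] at r1
        rw [r1, r2]
  -- conclude
  have ha : A.a = A'.a := by
    funext i j
    rcases le_or_gt (j - i) 0 with h | h
    · rw [A.outside i j (Or.inl h), A'.outside i j (Or.inl h)]
    rcases le_or_gt ((n:ℤ) + 3) (j - i) with h' | h'
    · rw [A.outside i j (Or.inr h'), A'.outside i j (Or.inr h')]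
    rcases eq_or_lt_of_le (show j - i ≤ (n:ℤ) + 2 by omega) with h'' | h''
    · have hj : j = i + (n:ℤ) + 2 := by omega
      rw [hj, A.botOne, A'.botOne]
    · set d : ℕ := (j - i - 1).toNat with hdd
      have hd : d ≤ n := by omega
      have hj : j = i + (d:ℤ) + 1 := by omega
      rw [hj]
      exact hrow d hd i
  cases A; cases A'
  dsimp only at ha
  subst ha
  rfl
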